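/- Let e ≥ 0 and let A be a finite subset of ℝ^2 not contained in any curve of degree at most e. Let R be the family of subsets B of A with |B| = binom(e+2,2) such that B is not contained in any curve of degree at most e. Then |R| ≥ |A| / 2^(binom(e+2,2)−1). -/

import Mathlib

open scoped Classical

noncomputable section

/-- The zero set in `ℝ × ℝ` of a polynomial in two variables. -/
def zeroSet (p : MvPolynomial (Fin 2) ℝ) : Set (ℝ × ℝ) :=
  {x | MvPolynomial.eval ![x.1, x.2] p = 0}

/-- `C` is a curve of degree `e`: the zero set of a polynomial of total degree `e`. -/
def IsCurve (e : ℕ) (C : Set (ℝ × ℝ)) : Prop :=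
  ∃ p : MvPolynomial (Fin 2) ℝ, p.totalDegree = e ∧ C = zeroSet p

/-- `C` is a curve of degree at most `d` (and at least `1`). -/
def IsCurveLe (d : ℕ) (C : Set (ℝ × ℝ)) : Prop :=
  ∃ e, 1 ≤ e ∧ e ≤ d ∧ IsCurve e C

/-- Index set for the `d`-Veronese map: pairs `(n, m)` with `1 ≤ n + m ≤ d`.
It has `(d+2).choose 2 - 1` elements. -/
abbrev VIdx (d : ℕ) : Type :=
  {q : Fin (d + 1) × Fin (d + 1) // 1 ≤ (q.1 : ℕ) + (q.2 : ℕ) ∧ (q.1 : ℕ) + (q.2 : ℕ) ≤ d}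

/-- The `d`-Veronese map `ℝ² → ℝ^((d+2).choose 2 - 1)`. -/
def vero (d : ℕ) (a : ℝ × ℝ) : VIdx d → ℝ :=
  fun q => a.1 ^ (q.1.1 : ℕ) * a.2 ^ (q.1.2 : ℕ)

/-- Dimension of the affine hull of a set. -/
noncomputable def adim {α : Type*} (S : Set (α → ℝ)) : ℕ :=
  Module.finrank ℝ (affineSpan ℝ S).direction

/-- Dimension of an affine subspace. -/
noncomputable def fdim {α : Type*} (F : AffineSubspace ℝ (α → ℝ)) : ℕ :=
  Module.finrank ℝ F.direction

abbrev Idx (e : ℕ) : Type :=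
  {q : Fin (e + 1) × Fin (e + 1) // (q.1 : ℕ) + (q.2 : ℕ) ≤ e}

/-- full Veronese including constant -/
def wmap (e : ℕ) (a : ℝ × ℝ) : Idx e → ℝ :=
  fun q => a.1 ^ (q.1.1 : ℕ) * a.2 ^ (q.1.2 : ℕ)

/-- exponent finsupp of an index -/
def expOf (e : ℕ) (q : Idx e) : Fin 2 →₀ ℕ :=
  Finsupp.equivFunOnFinite.symm ![(q.1.1 : ℕ), (q.1.2 : ℕ)]

lemma expOf_apply0 (e : ℕ) (q : Idx e) : expOf e q 0 = (q.1.1 : ℕ) := rfl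
lemma expOf_apply1 (e : ℕ) (q : Idx e) : expOf e q 1 = (q.1.2 : ℕ) := rfl

lemma expOf_inj (e : ℕ) : Function.Injective (expOf e) := by
  intro q q' h
  have h0 : expOf e q 0 = expOf e q' 0 := by rw [h]
  have h1 : expOf e q 1 = expOf e q' 1 := by rw [h]
  rw [expOf_apply0, expOf_apply0] at h0
  rw [expOf_apply1, expOf_apply1] at h1
  ext <;> [exact h0; exact h1]

lemma wmap_expOf (e : ℕ) (a : ℝ × ℝ) (q : Idx e) :
    wmap e a q = ∏ i : Fin 2, (![a.1, a.2] i) ^ (expOf e q i) := by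
  simp [wmap, Fin.prod_univ_two, expOf_apply0, expOf_apply1]

/-- any exponent vector with small degree comes from an index -/
lemma exists_idx (e : ℕ) (s : Fin 2 →₀ ℕ) (hs : s 0 + s 1 ≤ e) :
    ∃ q : Idx e, expOf e q = s := by
  refine ⟨⟨(⟨s 0, by omega⟩, ⟨s 1, by omega⟩), by simp; omega⟩, ?_⟩
  ext i
  fin_cases i
  · exact expOf_apply0 _ _
  · exact expOf_apply1 _ _

def polyOf (e : ℕ) (c : Idx e → ℝ) : MvPolynomial (Fin 2) ℝ :=
  ∑ q : Idx e, MvPolynomial.monomial (expOf e q) (c q)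

lemma eval_polyOf (e : ℕ) (c : Idx e → ℝ) (a : ℝ × ℝ) :
    MvPolynomial.eval ![a.1, a.2] (polyOf e c) = ∑ q : Idx e, c q * wmap e a q := by
  rw [polyOf, map_sum]
  refine Finset.sum_congr rfl fun q _ => ?_
  rw [MvPolynomial.eval_monomial, wmap_expOf]
  congr 1
  rw [Finsupp.prod_fintype]
  intro i; simp

lemma coeff_polyOf (e : ℕ) (c : Idx e → ℝ) (q : Idx e) :
    MvPolynomial.coeff (expOf e q) (polyOf e c) = c q := by
  rw [polyOf, MvPolynomial.coeff_sum]
  rw [Finset.sum_eq_single q]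
  · simp [MvPolynomial.coeff_monomial]
  · intro q' _ hq'
    rw [MvPolynomial.coeff_monomial, if_neg]
    exact fun h => hq' (expOf_inj e h)
  · simp

lemma totalDegree_polyOf_le (e : ℕ) (c : Idx e → ℝ) : (polyOf e c).totalDegree ≤ e := by
  refine le_trans (MvPolynomial.totalDegree_finset_sum _ _) ?_
  refine Finset.sup_le fun q _ => ?_
  refine le_trans (MvPolynomial.totalDegree_monomial_le _ _) ?_
  have h := q.2
  rw [Finsupp.sum_fintype _ _ (fun i => rfl), Fin.sum_univ_two, expOf_apply0, expOf_apply1]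
  exact h

lemma repr_poly (e : ℕ) (p : MvPolynomial (Fin 2) ℝ) (hp : p.totalDegree ≤ e) :
    p = polyOf e (fun q => MvPolynomial.coeff (expOf e q) p) := by
  apply MvPolynomial.ext
  intro m
  by_cases hm : m 0 + m 1 ≤ e
  · obtain ⟨q, hq⟩ := exists_idx e m hm
    rw [← hq, coeff_polyOf]
  · have h1 : MvPolynomial.coeff m p = 0 := by
      by_contra h
      have hmem : m ∈ p.support := MvPolynomial.mem_support_iff.mpr h
      have := MvPolynomial.le_totalDegree hmem
      rw [Finsupp.sum_fintype _ _ (fun i => rfl), Fin.sum_univ_two] at this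
      omega
    rw [h1, polyOf, MvPolynomial.coeff_sum]
    symm
    refine Finset.sum_eq_zero fun q _ => ?_
    rw [MvPolynomial.coeff_monomial, if_neg]
    intro h
    have h0 : expOf e q 0 = m 0 := by rw [h]
    have h1' : expOf e q 1 = m 1 := by rw [h]
    rw [expOf_apply0] at h0; rw [expOf_apply1] at h1'
    have := q.2
    omega

lemma lin_apply (e : ℕ) (f : (Idx e → ℝ) →ₗ[ℝ] ℝ) (v : Idx e → ℝ) :
    f v = ∑ q : Idx e, v q * f (Pi.single q 1) := by
  conv_lhs => rw [pi_eq_sum_univ v, map_sum]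
  refine Finset.sum_congr rfl fun q _ => ?_
  rw [map_smul, smul_eq_mul]
  congr 1
  refine congrArg f ?_
  ext j
  simp [Pi.single_apply, eq_comm]

lemma span_top_iff (e : ℕ) (B : Finset (ℝ × ℝ)) (hB : B.Nonempty) :
    (∀ C : Set (ℝ × ℝ), IsCurveLe e C → ¬(↑B ⊆ C)) ↔
      Submodule.span ℝ (wmap e '' ↑B) = ⊤ := by
  constructor
  · intro h
    by_contra hs
    -- get a nonzero functional vanishing on the span
    obtain ⟨f, hf0, hfmap⟩ := Submodule.exists_dual_map_eq_bot_of_lt_top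
      (lt_top_iff_ne_top.mpr hs) inferInstance
    have hfv : ∀ a ∈ B, f (wmap e a) = 0 := by
      intro a ha
      have : wmap e a ∈ Submodule.span ℝ (wmap e '' ↑B) :=
        Submodule.subset_span ⟨a, ha, rfl⟩
      have := Submodule.mem_map_of_mem (f := f) this
      rw [hfmap] at this
      simpa using this
    set c : Idx e → ℝ := fun q => f (Pi.single q 1) with hc
    set p := polyOf e c with hp
    have heval : ∀ a ∈ B, MvPolynomial.eval ![a.1, a.2] p = 0 := by
      intro a ha
      rw [hp, eval_polyOf]
      rw [← hfv a ha, lin_apply e f]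
      exact Finset.sum_congr rfl fun q _ => by rw [mul_comm]
    have hdeg1 : 1 ≤ p.totalDegree := by
      by_contra hd
      push_neg at hd
      have hd0 : p.totalDegree = 0 := by omega
      -- all nonconstant coefficients vanish
      have hcz : ∀ q : Idx e, (q.1.1 : ℕ) + (q.1.2 : ℕ) ≠ 0 → c q = 0 := by
        intro q hq
        have := coeff_polyOf e c q
        by_contra hne
        have hmem : expOf e q ∈ p.support := by
          rw [MvPolynomial.mem_support_iff, this]; exact hne
        have hle := MvPolynomial.le_totalDegree hmem
        rw [Finsupp.sum_fintype _ _ (fun i => rfl), Fin.sum_univ_two,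
          expOf_apply0, expOf_apply1, hd0] at hle
        omega
      obtain ⟨a, ha⟩ := hB
      have h0 := heval a ha
      rw [hp, eval_polyOf] at h0
      have q0 : Idx e := ⟨(0, 0), by simp⟩
      have hsum : ∑ q : Idx e, c q * wmap e a q = c ⟨(0,0), by simp⟩ := by
        rw [Finset.sum_eq_single (⟨(0,0), by simp⟩ : Idx e)]
        · simp [wmap]
        · intro q _ hq
          have : (q.1.1 : ℕ) + (q.1.2 : ℕ) ≠ 0 := by
            intro hz
            apply hq
            have h1 : (q.1.1 : ℕ) = 0 := by omega
            have h2 : (q.1.2 : ℕ) = 0 := by omega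
            apply Subtype.ext
            apply Prod.ext <;> [exact Fin.ext h1; exact Fin.ext h2]
          rw [hcz q this, zero_mul]
        · simp
      rw [hsum] at h0
      -- now all c are zero, so f = 0
      apply hf0
      apply LinearMap.ext
      intro v
      rw [lin_apply e f]
      simp only [LinearMap.zero_apply]
      refine Finset.sum_eq_zero fun q _ => ?_
      by_cases hq : (q.1.1 : ℕ) + (q.1.2 : ℕ) = 0
      · have h1 : (q.1.1 : ℕ) = 0 := by omega
        have h2 : (q.1.2 : ℕ) = 0 := by omega
        have : q = ⟨(0,0), by simp⟩ := by
          apply Subtype.ext; apply Prod.ext <;> [exact Fin.ext h1; exact Fin.ext h2]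
        rw [this]
        have h0' : f (Pi.single (⟨(0,0), by simp⟩ : Idx e) 1) = 0 := h0
        rw [h0', mul_zero]
      · have hq' : f (Pi.single q 1) = 0 := hcz q hq
        rw [hq', mul_zero]
    exact h (zeroSet p) ⟨p.totalDegree, hdeg1, totalDegree_polyOf_le e c, p, rfl, rfl⟩
      (fun a ha => heval a ha)
  · intro hspan C hC hBC
    obtain ⟨k, hk1, hke, p, hdeg, hCp⟩ := hC
    set c : Idx e → ℝ := fun q => MvPolynomial.coeff (expOf e q) p with hc
    have hrep : p = polyOf e c := repr_poly e p (hdeg ▸ hke)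
    -- functional
    set f : (Idx e → ℝ) →ₗ[ℝ] ℝ :=
      ∑ q : Idx e, c q • LinearMap.proj q with hf
    have hfapp : ∀ v, f v = ∑ q : Idx e, c q * v q := by
      intro v; rw [hf]; simp [LinearMap.sum_apply]
    have hfz : ∀ a ∈ B, f (wmap e a) = 0 := by
      intro a ha
      rw [hfapp, ← eval_polyOf, ← hrep]
      have : a ∈ C := hBC ha
      rw [hCp] at this
      exact this
    have hftop : ∀ v, f v = 0 := by
      intro v
      have hv : v ∈ Submodule.span ℝ (wmap e '' ↑B) := hspan ▸ Submodule.mem_top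
      refine Submodule.span_induction ?_ ?_ ?_ ?_ hv
      · rintro x ⟨a, ha, rfl⟩; exact hfz a ha
      · simp
      · intro x y _ _ hx hy; rw [map_add, hx, hy, add_zero]
      · intro r x _ hx; rw [map_smul, hx, smul_zero]
    -- then all coefficients are zero, so p = 0, contradicting totalDegree = k ≥ 1
    have hcz : ∀ q : Idx e, c q = 0 := by
      intro q
      have := hftop (Pi.single q 1)
      rw [hfapp] at this
      rw [Finset.sum_eq_single q] at this
      · simpa using this
      · intro q' _ hq'; simp [Pi.single_apply, hq']
      · simp
    have hpz : p = 0 := by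
      rw [hrep, polyOf]
      refine Finset.sum_eq_zero fun q _ => ?_
      rw [hcz q]; simp
    rw [hpz, MvPolynomial.totalDegree_zero] at hdeg
    omega

theorem card_Idx (e : ℕ) : Fintype.card (Idx e) = Nat.choose (e + 2) 2 := by
  have h : Fintype.card (Idx e) = Fintype.card (Σ n : Fin (e+1), Fin (e + 1 - n)) := by
    refine Fintype.card_congr ⟨fun q => ⟨q.1.1, ⟨q.1.2, by omega⟩⟩,
      fun s => ⟨(s.1, ⟨s.2, by omega⟩), by have := s.2.2; simp; omega⟩, ?_, ?_⟩
    · rintro ⟨⟨n, m⟩, h⟩; rfl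
    · rintro ⟨n, m⟩; rfl
  rw [h, Fintype.card_sigma]
  simp only [Fintype.card_fin]
  rw [Fin.sum_univ_eq_sum_range (fun n => e + 1 - n) (e+1)]
  rw [← Finset.sum_range_reflect (fun n => e + 1 - n) (e+1)]
  have hcong : ∀ j ∈ Finset.range (e+1), e + 1 - (e + 1 - 1 - j) = j + 1 := by
    intro j hj; simp at hj; omega
  rw [Finset.sum_congr rfl hcong]
  have h2 : (∑ j ∈ Finset.range (e+2), j) = ∑ j ∈ Finset.range (e+1), (j+1) := by
    rw [Finset.sum_range_succ' (fun j => j) (e+1)]; simp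
  have h3 := Finset.sum_range_id_mul_two (e+2)
  rw [Nat.choose_two_right]
  omega

lemma wmap_inj (e : ℕ) (he : 1 ≤ e) : Function.Injective (wmap e) := by
  intro a a' h
  have h1 : wmap e a ⟨(⟨1, by omega⟩, ⟨0, by omega⟩), by simp only [Fin.val_mk]; omega⟩ =
      wmap e a' ⟨(⟨1, by omega⟩, ⟨0, by omega⟩), by simp only [Fin.val_mk]; omega⟩ := by rw [h]
  have h2 : wmap e a ⟨(⟨0, by omega⟩, ⟨1, by omega⟩), by simp only [Fin.val_mk]; omega⟩ =
      wmap e a' ⟨(⟨0, by omega⟩, ⟨1, by omega⟩), by simp only [Fin.val_mk]; omega⟩ := by rw [h]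
  simp [wmap] at h1 h2
  exact Prod.ext h1 h2

theorem stmt_9 (e : ℕ) (A : Finset (ℝ × ℝ))
    (hA : ∀ C : Set (ℝ × ℝ), IsCurveLe e C → ¬(↑A ⊆ C)) :
    (A.card : ℝ) / 2 ^ (Nat.choose (e + 2) 2 - 1) ≤
      (((A.powersetCard (Nat.choose (e + 2) 2)).filter
        (fun B => ∀ C : Set (ℝ × ℝ), IsCurveLe e C → ¬(↑B ⊆ C))).card : ℝ) := by
  set N := Nat.choose (e + 2) 2 with hN
  set R := (A.powersetCard N).filter
      (fun B => ∀ C : Set (ℝ × ℝ), IsCurveLe e C → ¬(↑B ⊆ C)) with hR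
  rcases Nat.eq_zero_or_pos e with he | he
  · -- degenerate case e = 0
    subst he
    have hN1 : N = 1 := by simp [hN]
    have hfalse : ∀ C : Set (ℝ × ℝ), ¬ IsCurveLe 0 C := by
      rintro C ⟨k, hk1, hk0, _⟩; omega
    have : R = A.powersetCard N := by
      rw [hR]
      apply Finset.filter_true_of_mem
      intro B _ C hC
      exact absurd hC (hfalse C)
    rw [this, Finset.card_powersetCard, hN1]
    simp [Nat.choose_one_right]
  · -- main case e ≥ 1
    have hnonempty : A.Nonempty := by
      rcases A.eq_empty_or_nonempty with h | h
      · exfalso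
        refine hA (zeroSet (MvPolynomial.X 0)) ⟨1, le_refl 1, he, MvPolynomial.X 0,
          MvPolynomial.totalDegree_X 0, rfl⟩ ?_
        rw [h]; simp
      · exact h
    have hspanA : Submodule.span ℝ (wmap e '' ↑A) = ⊤ := (span_top_iff e A hnonempty).mp hA
    -- key: every point of A lies in some member of R
    have hkey : ∀ a ∈ A, ∃ B ∈ R, a ∈ B := by
      intro a ha
      have hwa : wmap e a ≠ 0 := by
        intro h
        have := congrFun h ⟨(0, 0), by simp⟩
        simp [wmap] at this
      have hli : LinearIndepOn ℝ id ({wmap e a} : Set (Idx e → ℝ)) :=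
        (linearIndepOn_singleton_iff ℝ).mpr hwa
      have hst : ({wmap e a} : Set (Idx e → ℝ)) ⊆ wmap e '' ↑A := by
        rintro x rfl; exact ⟨a, ha, rfl⟩
      set b := hli.extend hst with hb
      have hbsub : b ⊆ wmap e '' ↑A := hli.extend_subset hst
      have hbli : LinearIndependent ℝ ((↑) : b → (Idx e → ℝ)) := (hli.linearIndepOn_extend hst).linearIndependent
      have hbspan : Submodule.span ℝ b = ⊤ := by
        rw [hli.span_extend_eq_span hst, hspanA]
      have hbfin : b.Finite := hbli.setFinite
      have := hbfin.fintype
      -- b is a basis, so it has N elements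
      have hbasis : Module.Basis b ℝ (Idx e → ℝ) := Module.Basis.mk hbli (by rw [Subtype.range_coe, hbspan])
      have hcardb : Fintype.card b = N := by
        rw [← Module.finrank_eq_card_basis hbasis, Module.finrank_fintype_fun_eq_card,
          card_Idx]
      set B := A.filter (fun x => wmap e x ∈ b) with hB
      have haB : a ∈ B := by
        rw [hB, Finset.mem_filter]
        exact ⟨ha, hli.subset_extend hst rfl⟩
      have himg : wmap e '' ↑B = b := by
        apply Set.Subset.antisymm
        · rintro v ⟨x, hx, rfl⟩
          rw [hB] at hx
          simp only [Finset.coe_filter, Set.mem_setOf_eq] at hx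
          exact hx.2
        · intro v hv
          obtain ⟨x, hx, rfl⟩ := hbsub hv
          exact ⟨x, by rw [hB]; simp only [Finset.coe_filter, Set.mem_setOf_eq]; exact ⟨hx, hv⟩, rfl⟩
      have hcardB : B.card = N := by
        have h1 : (B.image (wmap e)).card = B.card :=
          Finset.card_image_of_injective B (wmap_inj e he)
        have h2 : B.image (wmap e) = hbfin.toFinset := by
          apply Finset.coe_injective
          rw [Finset.coe_image, himg, Set.Finite.coe_toFinset]
        have h3 : hbfin.toFinset.card = Fintype.card b := Set.Finite.card_toFinset hbfin
        rw [← h1, h2, h3, hcardb]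
      refine ⟨B, ?_, haB⟩
      rw [hR, Finset.mem_filter]
      refine ⟨Finset.mem_powersetCard.mpr ⟨Finset.filter_subset _ _, hcardB⟩, ?_⟩
      rw [span_top_iff e B ⟨a, haB⟩, himg, hbspan]
    -- counting argument
    classical
    have hex : ∀ a : ℝ × ℝ, a ∈ A → ∃ B, B ∈ R ∧ a ∈ B := by
      intro a ha; obtain ⟨B, h1, h2⟩ := hkey a ha; exact ⟨B, h1, h2⟩
    set F : ℝ × ℝ → Finset (ℝ × ℝ) := fun a => if h : a ∈ A then (hex a h).choose else ∅
      with hF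
    have hFmem : ∀ a ∈ A, F a ∈ R ∧ a ∈ F a := by
      intro a ha
      rw [hF]
      simp only [dif_pos ha]
      exact (hex a ha).choose_spec
    have hcount : A.card ≤ N * (A.image F).card := by
      apply Finset.card_le_mul_card_image
      intro B hB'
      obtain ⟨a0, ha0, rfl⟩ := Finset.mem_image.mp hB'
      have hsub : A.filter (fun x => F x = F a0) ⊆ F a0 := by
        intro x hx
        rw [Finset.mem_filter] at hx
        have := (hFmem x hx.1).2
        rwa [hx.2] at this
      have hcard := Finset.card_le_card hsub
      have : (F a0).card = N := by
        have := (hFmem a0 ha0).1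
        rw [hR, Finset.mem_filter, Finset.mem_powersetCard] at this
        exact this.1.2
      omega
    have himsub : A.image F ⊆ R := by
      intro B hB'
      obtain ⟨a0, ha0, rfl⟩ := Finset.mem_image.mp hB'
      exact (hFmem a0 ha0).1
    have hcount2 : A.card ≤ N * R.card :=
      le_trans hcount (Nat.mul_le_mul_left N (Finset.card_le_card himsub))
    have hN1 : 1 ≤ N := Nat.choose_pos (by omega)
    have hN2 : N ≤ 2 ^ (N - 1) := by
      have := (N - 1).lt_two_pow_self
      omega
    have hfinal : A.card ≤ 2 ^ (N - 1) * R.card :=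
      le_trans hcount2 (Nat.mul_le_mul_right _ hN2)
    rw [div_le_iff₀ (by positivity)]
    calc (A.card : ℝ) ≤ (2 ^ (N - 1) * R.card : ℕ) := by exact_mod_cast hfinal
      _ = R.card * 2 ^ (N - 1) := by push_cast; ring
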